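/- One-step descent inequality for Lloyd's optimal quantization map: let μ be a compactly supported absolutely continuous probability measure on ℝ^d, Y ∉ D_N with all Voronoi cells of positive μ-measure, and let Y' = T_N(Y) be given by the Voronoi barycenters, i.e. y'_i = (∫_{V_i(Y)} x dμ(x)) / μ(V_i(Y)). Then G_N(Y) ≥ G_N(Y') + (1/2) Σ_{i=1}^N μ(V_i(Y)) ‖y'_i − y_i‖², where G_N(Y) = (1/2) ∫ min_i ‖x − y_i‖² dμ(x). -/

import Mathlib

set_option maxHeartbeats 2000000
open MeasureTheory
open scoped RealInnerProductSpace

/-- The open Voronoi cell of index `i` for the points `Y`. -/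
def voronoiCell {d N : ℕ} (Y : Fin N → EuclideanSpace ℝ (Fin d)) (i : Fin N) :
    Set (EuclideanSpace ℝ (Fin d)) :=
  {x | ∀ j, j ≠ i → ‖x - Y i‖ ^ 2 < ‖x - Y j‖ ^ 2}

/-- The optimal quantization functional `G_N(Y) = (1/2) ∫ min_i ‖x − y_i‖² dμ(x)`. -/
noncomputable def quantFun {d N : ℕ} (μ : Measure (EuclideanSpace ℝ (Fin d)))
    (Y : Fin N → EuclideanSpace ℝ (Fin d)) : ℝ :=
  (1 / 2) * ∫ x, (⨅ i, ‖x - Y i‖ ^ 2) ∂μ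

lemma lloyd_aux_integrable {d : ℕ} {F : Type*} [NormedAddCommGroup F] [NormedSpace ℝ F]
    (μ : Measure (EuclideanSpace ℝ (Fin d))) [IsFiniteMeasure μ]
    {K : Set (EuclideanSpace ℝ (Fin d))} (hK : IsCompact K) (hKfull : μ Kᶜ = 0)
    {f : EuclideanSpace ℝ (Fin d) → F} (hf : Continuous f) : Integrable f μ := by
  have h1 : μ.restrict K = μ :=
    Measure.restrict_eq_self_of_ae_mem (by rw [MeasureTheory.ae_iff]; exact hKfull)
  rw [← h1]
  exact hf.continuousOn.integrableOn_compact hK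

/-- One-step descent inequality for Lloyd's optimal quantization map. -/
theorem lloyd_descent {d N : ℕ} [NeZero N]
    (μ : Measure (EuclideanSpace ℝ (Fin d))) [IsProbabilityMeasure μ]
    (hac : μ ≪ volume) (K : Set (EuclideanSpace ℝ (Fin d)))
    (hK : IsCompact K) (hKfull : μ Kᶜ = 0)
    (Y : Fin N → EuclideanSpace ℝ (Fin d))
    (hY : ∀ i j : Fin N, i ≠ j → Y i ≠ Y j)
    (hpos : ∀ i, 0 < μ (voronoiCell Y i))
    (Y' : Fin N → EuclideanSpace ℝ (Fin d))
    (hY' : ∀ i, Y' i = (μ (voronoiCell Y i)).toReal⁻¹ • ∫ x in voronoiCell Y i, x ∂μ) :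
    quantFun μ Y ≥ quantFun μ Y'
      + (1 / 2) * ∑ i, (μ (voronoiCell Y i)).toReal * ‖Y' i - Y i‖ ^ 2 := by
  haveI : Nonempty (Fin N) := ⟨⟨0, Nat.pos_of_ne_zero (NeZero.ne N)⟩⟩
  -- basic continuity facts
  have hcontn : ∀ z : EuclideanSpace ℝ (Fin d), Continuous fun x : EuclideanSpace ℝ (Fin d) => ‖x - z‖ ^ 2 := fun z =>
    ((continuous_id.sub continuous_const).norm).pow 2
  have hbdd : ∀ (Z : Fin N → EuclideanSpace ℝ (Fin d)) (x : EuclideanSpace ℝ (Fin d)), BddBelow (Set.range fun j => ‖x - Z j‖ ^ 2) := by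
    rintro Z x
    refine ⟨0, ?_⟩
    rintro y ⟨j, rfl⟩
    positivity
  have hcontinf : ∀ Z : Fin N → EuclideanSpace ℝ (Fin d), Continuous fun x : EuclideanSpace ℝ (Fin d) => ⨅ i, ‖x - Z i‖ ^ 2 := by
    intro Z
    have he : (fun x : EuclideanSpace ℝ (Fin d) => ⨅ i, ‖x - Z i‖ ^ 2)
        = fun x => Finset.univ.inf' Finset.univ_nonempty fun i => ‖x - Z i‖ ^ 2 := by
      funext x
      exact (Finset.inf'_univ_eq_ciInf _).symm
    rw [he]
    exact Continuous.finset_inf'_apply _ fun i _ => hcontn (Z i)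
  -- Voronoi cells are open, measurable, pairwise disjoint
  have hVopen : ∀ i, IsOpen (voronoiCell Y i) := by
    intro i
    have : voronoiCell Y i = ⋂ j, {x : EuclideanSpace ℝ (Fin d) | j ≠ i → ‖x - Y i‖ ^ 2 < ‖x - Y j‖ ^ 2} := by
      ext x; simp [voronoiCell]
    rw [this]
    refine isOpen_iInter_of_finite fun j => ?_
    by_cases hj : j = i
    · simp [hj]
    · simp only [hj, ne_eq, not_false_eq_true, forall_true_left]
      exact isOpen_lt (hcontn (Y i)) (hcontn (Y j))
  have hVmeas : ∀ i, MeasurableSet (voronoiCell Y i) := fun i => (hVopen i).measurableSet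
  have hdisj : Pairwise (Function.onFun Disjoint (voronoiCell Y)) := by
    intro i j hij
    rw [Function.onFun, Set.disjoint_left]
    intro x hxi hxj
    exact lt_asymm (hxi j (Ne.symm hij)) (hxj i hij)
  -- the complement of the union of cells is null
  have hcover : μ (⋃ i, voronoiCell Y i)ᶜ = 0 := by
    set S : Set (EuclideanSpace ℝ (Fin d)) := ⋃ (i : Fin N) (j : Fin N) (_ : Y i ≠ Y j),
      (AffineSubspace.perpBisector (Y i) (Y j) : Set (EuclideanSpace ℝ (Fin d))) with hS
    have hSnull : volume S = 0 := by
      refine measure_iUnion_null fun i => measure_iUnion_null fun j =>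
        measure_iUnion_null fun hij => Measure.addHaar_affineSubspace _ _ ?_
      intro htop
      have : Y i ∈ AffineSubspace.perpBisector (Y i) (Y j) := by
        rw [htop]; trivial
      rw [AffineSubspace.mem_perpBisector_iff_dist_eq, dist_self] at this
      exact hij (dist_eq_zero.mp this.symm)
    refine measure_mono_null ?_ (hac hSnull)
    intro x hx
    simp only [Set.mem_compl_iff, Set.mem_iUnion, not_exists] at hx
    obtain ⟨i, -, hmin⟩ := Finset.exists_min_image Finset.univ (fun i => ‖x - Y i‖)
      ⟨Classical.arbitrary _, Finset.mem_univ _⟩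
    have : ¬ (∀ j, j ≠ i → ‖x - Y i‖ ^ 2 < ‖x - Y j‖ ^ 2) := hx i
    push_neg at this
    obtain ⟨j, hj, hle⟩ := this
    have h1 : ‖x - Y i‖ ≤ ‖x - Y j‖ := hmin j (Finset.mem_univ _)
    have heq : ‖x - Y i‖ = ‖x - Y j‖ := by
      nlinarith [norm_nonneg (x - Y i), norm_nonneg (x - Y j)]
    have hYij : Y i ≠ Y j := hY i j (Ne.symm hj)
    refine Set.mem_iUnion.2 ⟨i, Set.mem_iUnion.2 ⟨j, Set.mem_iUnion.2 ⟨hYij, ?_⟩⟩⟩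
    rw [SetLike.mem_coe, AffineSubspace.mem_perpBisector_iff_dist_eq, dist_eq_norm,
      dist_eq_norm]
    exact heq
  have hU : μ.restrict (⋃ i, voronoiCell Y i) = μ :=
    Measure.restrict_eq_self_of_ae_mem (by rw [MeasureTheory.ae_iff]; exact hcover)
  -- decomposition of integrals over cells
  have hsum : ∀ f : EuclideanSpace ℝ (Fin d) → ℝ, Integrable f μ →
      ∫ x, f x ∂μ = ∑ i, ∫ x in voronoiCell Y i, f x ∂μ := by
    intro f hf
    calc ∫ x, f x ∂μ = ∫ x in ⋃ i, voronoiCell Y i, f x ∂μ := by rw [hU]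
      _ = ∑ i, ∫ x in voronoiCell Y i, f x ∂μ :=
        integral_iUnion_fintype hVmeas hdisj fun i => hf.integrableOn
  -- integrability
  have hint0 : Integrable (fun x => ⨅ i, ‖x - Y i‖ ^ 2) μ :=
    lloyd_aux_integrable μ hK hKfull (hcontinf Y)
  have hint0' : Integrable (fun x => ⨅ i, ‖x - Y' i‖ ^ 2) μ :=
    lloyd_aux_integrable μ hK hKfull (hcontinf Y')
  have hintn : ∀ z : EuclideanSpace ℝ (Fin d), Integrable (fun x => ‖x - z‖ ^ 2) μ := fun z =>
    lloyd_aux_integrable μ hK hKfull (hcontn z)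
  have hintx : Integrable (fun x : EuclideanSpace ℝ (Fin d) => x) μ :=
    lloyd_aux_integrable μ hK hKfull continuous_id
  have hm0 : ∀ i, (μ (voronoiCell Y i)).toReal ≠ 0 := fun i =>
    (ENNReal.toReal_pos (hpos i).ne' (measure_ne_top μ _)).ne'
  -- bias-variance decomposition
  have hbv : ∀ i, ∫ x in voronoiCell Y i, ‖x - Y i‖ ^ 2 ∂μ
      = (∫ x in voronoiCell Y i, ‖x - Y' i‖ ^ 2 ∂μ) + (μ (voronoiCell Y i)).toReal * ‖Y' i - Y i‖ ^ 2 := by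
    intro i
    have hbary : ∫ x in voronoiCell Y i, (x : EuclideanSpace ℝ (Fin d)) ∂μ = (μ (voronoiCell Y i)).toReal • Y' i := by
      rw [hY' i, smul_inv_smul₀ (hm0 i)]
    have hx_int : Integrable (fun x => x - Y' i) (μ.restrict (voronoiCell Y i)) :=
      hintx.restrict.sub (integrable_const _)
    have hzero : ∫ x in voronoiCell Y i, ⟪Y' i - Y i, x - Y' i⟫ ∂μ = 0 := by
      rw [integral_inner hx_int]
      have : ∫ x in voronoiCell Y i, (x - Y' i) ∂μ = 0 := by
        rw [integral_sub hintx.restrict (integrable_const _), setIntegral_const, hbary, measureReal_def,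
          sub_self]
      rw [this, inner_zero_right]
    have hpt : ∀ x : EuclideanSpace ℝ (Fin d), ‖x - Y i‖ ^ 2
        = ‖x - Y' i‖ ^ 2 + (2 * ⟪Y' i - Y i, x - Y' i⟫ + ‖Y' i - Y i‖ ^ 2) := by
      intro x
      have hx : x - Y i = (x - Y' i) + (Y' i - Y i) := by abel
      rw [hx, norm_add_sq_real, real_inner_comm]
      ring
    have i1 : Integrable (fun x => ‖x - Y' i‖ ^ 2) (μ.restrict (voronoiCell Y i)) :=
      (hintn (Y' i)).restrict
    have i2a : Integrable (fun x : EuclideanSpace ℝ (Fin d) => 2 * ⟪Y' i - Y i, x - Y' i⟫) (μ.restrict (voronoiCell Y i)) :=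
      (hx_int.const_inner (Y' i - Y i)).const_mul 2
    have step1 : ∫ x in voronoiCell Y i, ‖x - Y i‖ ^ 2 ∂μ
        = ∫ x in voronoiCell Y i,
            (‖x - Y' i‖ ^ 2 + (2 * ⟪Y' i - Y i, x - Y' i⟫ + ‖Y' i - Y i‖ ^ 2)) ∂μ := by
      exact integral_congr_ae (Filter.Eventually.of_forall fun x => hpt x)
    have step2 : ∫ x in voronoiCell Y i,
          (‖x - Y' i‖ ^ 2 + (2 * ⟪Y' i - Y i, x - Y' i⟫ + ‖Y' i - Y i‖ ^ 2)) ∂μ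
        = (∫ x in voronoiCell Y i, ‖x - Y' i‖ ^ 2 ∂μ)
          + ∫ x in voronoiCell Y i, (2 * ⟪Y' i - Y i, x - Y' i⟫ + ‖Y' i - Y i‖ ^ 2) ∂μ :=
      integral_add i1 (i2a.add (integrable_const _))
    have step3 : ∫ x in voronoiCell Y i,
          (2 * ⟪Y' i - Y i, x - Y' i⟫ + ‖Y' i - Y i‖ ^ 2) ∂μ
        = (μ (voronoiCell Y i)).toReal * ‖Y' i - Y i‖ ^ 2 := by
      rw [integral_add i2a (integrable_const _), integral_const_mul _, hzero,
        setIntegral_const, smul_eq_mul, measureReal_def]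
      ring
    rw [step1, step2, step3]
  -- main identities
  have e1 : ∫ x, (⨅ i, ‖x - Y i‖ ^ 2) ∂μ = ∑ i, ∫ x in voronoiCell Y i, ‖x - Y i‖ ^ 2 ∂μ := by
    rw [hsum _ hint0]
    refine Finset.sum_congr rfl fun i _ => setIntegral_congr_fun (hVmeas i) fun x hx => ?_
    refine le_antisymm (ciInf_le (hbdd Y x) i) (le_ciInf fun j => ?_)
    by_cases hj : j = i
    · rw [hj]
    · exact (hx j hj).le
  have e2 : ∫ x, (⨅ i, ‖x - Y' i‖ ^ 2) ∂μ = ∑ i, ∫ x in voronoiCell Y i, ⨅ j, ‖x - Y' j‖ ^ 2 ∂μ :=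
    hsum _ hint0'
  have hle : ∀ i, (∫ x in voronoiCell Y i, ⨅ j, ‖x - Y' j‖ ^ 2 ∂μ) ≤ ∫ x in voronoiCell Y i, ‖x - Y' i‖ ^ 2 ∂μ :=
    fun i => integral_mono hint0'.restrict (hintn (Y' i)).restrict
      fun x => ciInf_le (hbdd Y' x) i
  have hsumle : (∑ i, ∫ x in voronoiCell Y i, ⨅ j, ‖x - Y' j‖ ^ 2 ∂μ)
      ≤ ∑ i, ∫ x in voronoiCell Y i, ‖x - Y' i‖ ^ 2 ∂μ :=
    Finset.sum_le_sum fun i _ => hle i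
  have e3 : (∑ i, ∫ x in voronoiCell Y i, ‖x - Y i‖ ^ 2 ∂μ)
      = (∑ i, ∫ x in voronoiCell Y i, ‖x - Y' i‖ ^ 2 ∂μ) + ∑ i, (μ (voronoiCell Y i)).toReal * ‖Y' i - Y i‖ ^ 2 := by
    rw [← Finset.sum_add_distrib]
    exact Finset.sum_congr rfl fun i _ => hbv i
  simp only [quantFun, ge_iff_le, e1, e2, e3]
  linarith
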